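/- arXiv:2508.01160 — 3 statements merged into one kernel-verified Lean document; each statement's English description precedes it below -/
import Mathlib

section
/- Let V be a finite-dimensional ℚ(t)-vector space with a symmetric bilinear form (·,·), and let v_1,…,v_n be a basis of V such that (v_i, v_j) ∈ δ_{i,j} + t·A_0 for all i,j (where A_0 is the localization of ℚ[t] at (t)). Then for every nonzero v ∈ V one has (v,v) ≠ 0; in particular, the restriction of the form to any subspace of V is nondegenerate. -/
open Polynomial

noncomputable def A0 : Subring (RatFunc ℚ) where
  carrier := {r | ∃ f g : ℚ[X], g.eval 0 ≠ 0 ∧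
    r = algebraMap ℚ[X] (RatFunc ℚ) f / algebraMap ℚ[X] (RatFunc ℚ) g}
  zero_mem' := ⟨0, 1, by simp, by simp⟩
  one_mem' := ⟨1, 1, by simp, by simp⟩
  add_mem' := by
    rintro r s ⟨f1, g1, h1, rfl⟩ ⟨f2, g2, h2, rfl⟩
    have hg1 : (algebraMap ℚ[X] (RatFunc ℚ)) g1 ≠ 0 :=
      RatFunc.algebraMap_ne_zero (fun h => h1 (by simp [h]))
    have hg2 : (algebraMap ℚ[X] (RatFunc ℚ)) g2 ≠ 0 :=
      RatFunc.algebraMap_ne_zero (fun h => h2 (by simp [h]))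
    refine ⟨f1 * g2 + f2 * g1, g1 * g2, by simp [h1, h2], ?_⟩
    field_simp
    simp only [map_add, map_mul]
    ring
  neg_mem' := by
    rintro r ⟨f, g, h, rfl⟩
    exact ⟨-f, g, h, by rw [map_neg, neg_div]⟩
  mul_mem' := by
    rintro r s ⟨f1, g1, h1, rfl⟩ ⟨f2, g2, h2, rfl⟩
    refine ⟨f1 * f2, g1 * g2, by simp [h1, h2], ?_⟩
    rw [map_mul, map_mul, div_mul_div_comm]

noncomputable def tElem : A0 :=
  ⟨algebraMap ℚ[X] (RatFunc ℚ) X, X, 1, by simp, by simp⟩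

noncomputable def tIdeal : Ideal A0 := Ideal.span {tElem}

/-- The subset `t·A₀` of `ℚ(t)`. -/
noncomputable def tA0Set : Set (RatFunc ℚ) :=
  {x | ∃ y ∈ A0, x = algebraMap ℚ[X] (RatFunc ℚ) X * y}


section Aux
set_option synthInstance.maxHeartbeats 1000000
set_option maxHeartbeats 1000000

local notation "φ" => algebraMap ℚ[X] (RatFunc ℚ)

lemma algebraMap_mem_A0 (p : ℚ[X]) : φ p ∈ A0 :=
  ⟨p, 1, by simp, by simp⟩

lemma key_lemma (q : ℚ[X]) (hq : q.eval 0 ≠ 0) (a : RatFunc ℚ) (ha : a ∈ A0) :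
    φ q + φ X * a ≠ 0 := by
  obtain ⟨f, g, hg, rfl⟩ := ha
  intro h
  have hg' : φ g ≠ 0 := RatFunc.algebraMap_ne_zero (fun h0 => hg (by simp [h0]))
  have h2 : φ (q * g + X * f) = 0 := by
    rw [map_add, map_mul, map_mul]
    field_simp at h
    rw [RatFunc.algebraMap_X] at *
    linear_combination h
  have h3 : q * g + X * f = 0 := RatFunc.algebraMap_injective ℚ (by simpa using h2)
  have h4 := congrArg (Polynomial.eval 0) h3
  simp at h4
  rcases h4 with h4 | h4 <;> [exact hq h4; exact hg h4]

lemma core_lemma (n : ℕ) (V : Type*) [AddCommGroup V] [Module (RatFunc ℚ) V]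
    (B : V →ₗ[RatFunc ℚ] V →ₗ[RatFunc ℚ] RatFunc ℚ)
    (v : Module.Basis (Fin n) (RatFunc ℚ) V)
    (hgram : ∀ i j, B (v i) (v j) - (if i = j then 1 else 0) ∈ tA0Set)
    (q : Fin n → ℚ[X]) (i₀ : Fin n) (hq : (q i₀).eval 0 ≠ 0) :
    B (∑ i, φ (q i) • v i) (∑ i, φ (q i) • v i) ≠ 0 := by
  choose a haA haB using hgram
  have hB : ∀ i j, B (v i) (v j) = (if i = j then 1 else 0) + φ X * a i j := by
    intro i j; have := haB i j; linear_combination this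
  have expand : B (∑ i, φ (q i) • v i) (∑ i, φ (q i) • v i)
      = ∑ i, ∑ j, φ (q i) * φ (q j) * B (v i) (v j) := by
    simp only [map_sum, map_smul, LinearMap.sum_apply, LinearMap.smul_apply, smul_eq_mul,
      Finset.mul_sum]
    rw [Finset.sum_comm]
    exact Finset.sum_congr rfl fun i _ => Finset.sum_congr rfl fun j _ => by ring
  rw [expand]
  have split : ∑ i, ∑ j, φ (q i) * φ (q j) * B (v i) (v j)
      = φ (∑ i, (q i) ^ 2) + φ X * ∑ i, ∑ j, φ (q i) * φ (q j) * a i j := by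
    simp only [hB, mul_add, Finset.sum_add_distrib, map_sum, map_pow]
    congr 1
    · rw [Finset.sum_comm]  -- maybe not needed
      refine Finset.sum_congr rfl fun i _ => ?_
      simp [Finset.mul_sum, mul_ite, Finset.sum_ite_eq, sq]
    · rw [Finset.mul_sum]
      refine Finset.sum_congr rfl fun i _ => ?_
      rw [Finset.mul_sum]
      refine Finset.sum_congr rfl fun j _ => ?_
      ring
  rw [split]
  refine key_lemma _ ?_ _ ?_
  · have : (∑ i, (q i) ^ 2).eval 0 = ∑ i, ((q i).eval 0) ^ 2 := by
      simp [Polynomial.eval_finset_sum]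
    rw [this]
    have hpos : 0 < ∑ i, ((q i).eval 0) ^ 2 :=
      Finset.sum_pos' (fun i _ => sq_nonneg _)
        ⟨i₀, Finset.mem_univ _, by positivity⟩
    exact ne_of_gt hpos
  · exact Subring.sum_mem _ fun i _ => Subring.sum_mem _ fun j _ =>
      Subring.mul_mem _ (Subring.mul_mem _ (algebraMap_mem_A0 _) (algebraMap_mem_A0 _)) (haA i j)

end Aux

set_option synthInstance.maxHeartbeats 1000000 in
set_option maxHeartbeats 1000000 in
/-- if a symmetric bilinear form on a finite-dimensional `ℚ(t)`-vector
space has a basis whose Gram matrix entries lie in `δ i j + t·A₀`, then `(v,v) ≠ 0`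
for every nonzero `v`; in particular the form is nondegenerate on every subspace. -/
theorem stmt_4 (n : ℕ) (V : Type*) [AddCommGroup V] [Module (RatFunc ℚ) V]
    (B : V →ₗ[RatFunc ℚ] V →ₗ[RatFunc ℚ] RatFunc ℚ)
    (hsymm : ∀ x y, B x y = B y x)
    (v : Module.Basis (Fin n) (RatFunc ℚ) V)
    (hgram : ∀ i j, B (v i) (v j) - (if i = j then 1 else 0) ∈ tA0Set) :
    (∀ x : V, x ≠ 0 → B x x ≠ 0) ∧
    ∀ W : Submodule (RatFunc ℚ) V, ∀ w ∈ W, (∀ w' ∈ W, B w w' = 0) → w = 0 := by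
  have φinj : Function.Injective (algebraMap ℚ[X] (RatFunc ℚ)) := RatFunc.algebraMap_injective ℚ
  have main : ∀ x : V, x ≠ 0 → B x x ≠ 0 := by
    intro x hx
    set c : Fin n → RatFunc ℚ := fun i => v.repr x i with hc
    have hex : ∃ i, c i ≠ 0 := by
      by_contra h
      push_neg at h
      apply hx
      have : v.repr x = 0 := Finsupp.ext fun i => h i
      simpa [this] using (v.sum_repr x).symm
    -- common denominator
    set D : ℚ[X] := ∏ i, (c i).denom with hD
    have hDne : D ≠ 0 := Finset.prod_ne_zero_iff.mpr fun i _ => RatFunc.denom_ne_zero _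
    set P : Fin n → ℚ[X] := fun i => (c i).num * ∏ j ∈ Finset.univ.erase i, (c j).denom with hPdef
    have hP : ∀ i, c i * algebraMap ℚ[X] (RatFunc ℚ) D = algebraMap ℚ[X] (RatFunc ℚ) (P i) := by
      intro i
      have h1 : D = (c i).denom * ∏ j ∈ Finset.univ.erase i, (c j).denom :=
        (Finset.mul_prod_erase _ _ (Finset.mem_univ i)).symm
      have h2 : algebraMap ℚ[X] (RatFunc ℚ) (c i).denom ≠ 0 :=
        RatFunc.algebraMap_ne_zero (RatFunc.denom_ne_zero _)
      have base : c i * algebraMap ℚ[X] (RatFunc ℚ) (c i).denom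
          = algebraMap ℚ[X] (RatFunc ℚ) (c i).num :=
        ((div_eq_iff h2).mp (RatFunc.num_div_denom (c i))).symm
      simp only [h1, hPdef, map_mul]
      rw [← mul_assoc, base]
    obtain ⟨i₀, hi₀⟩ := hex
    have hPi₀ : P i₀ ≠ 0 := by
      refine mul_ne_zero (RatFunc.num_ne_zero hi₀) ?_
      exact Finset.prod_ne_zero_iff.mpr fun j _ => RatFunc.denom_ne_zero _
    set S : Finset (Fin n) := Finset.univ.filter (fun i => P i ≠ 0) with hS
    have hSne : S.Nonempty := ⟨i₀, by simp [hS, hPi₀]⟩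
    set m : ℕ := S.inf' hSne (fun i => (P i).rootMultiplicity 0) with hm
    have hdvd : ∀ i, X ^ m ∣ P i := by
      intro i
      by_cases h : P i = 0
      · simp [h]
      · have hle : m ≤ (P i).rootMultiplicity 0 :=
          Finset.inf'_le _ (by simp [hS, h])
        have := Polynomial.pow_rootMultiplicity_dvd (P i) 0
        simp only [map_zero, sub_zero] at this
        exact dvd_trans (pow_dvd_pow X hle) this
    choose Q hQ using fun i => hdvd i
    obtain ⟨i₁, hi₁S, hi₁⟩ := Finset.exists_mem_eq_inf' hSne (fun i => (P i).rootMultiplicity 0)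
    have hPi₁ : P i₁ ≠ 0 := by simpa [hS] using hi₁S
    have hQ0 : (Q i₁).eval 0 ≠ 0 := by
      intro h0
      have hXdvd : X ∣ Q i₁ := Polynomial.X_dvd_iff.mpr (by
        rwa [Polynomial.coeff_zero_eq_eval_zero])
      have : X ^ (m + 1) ∣ P i₁ := by
        rw [hQ i₁, pow_succ]
        exact mul_dvd_mul_left _ hXdvd
      have hle : m + 1 ≤ (P i₁).rootMultiplicity 0 := by
        rw [Polynomial.le_rootMultiplicity_iff hPi₁]
        simpa using this
      omega
    -- the rescaled vector
    set y : V := ∑ i, algebraMap ℚ[X] (RatFunc ℚ) (Q i) • v i with hy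
    have hyne : B y y ≠ 0 := core_lemma n V B v hgram Q i₁ hQ0
    set s : RatFunc ℚ := algebraMap ℚ[X] (RatFunc ℚ) (X ^ m) / algebraMap ℚ[X] (RatFunc ℚ) D
      with hs
    have hsne : s ≠ 0 := by
      apply div_ne_zero
      · exact RatFunc.algebraMap_ne_zero (pow_ne_zero _ Polynomial.X_ne_zero)
      · exact RatFunc.algebraMap_ne_zero hDne
    have hxy : x = s • y := by
      have hci : ∀ i, c i = s * algebraMap ℚ[X] (RatFunc ℚ) (Q i) := by
        intro i
        have hDne' : algebraMap ℚ[X] (RatFunc ℚ) D ≠ 0 := RatFunc.algebraMap_ne_zero hDne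
        have hci' : c i = algebraMap ℚ[X] (RatFunc ℚ) (P i) / algebraMap ℚ[X] (RatFunc ℚ) D := by
          rw [eq_div_iff hDne']; exact hP i
        rw [hci', hQ i, map_mul, hs]
        ring
      rw [hy, Finset.smul_sum]
      have := (v.sum_repr x).symm
      rw [this]
      refine Finset.sum_congr rfl fun i _ => ?_
      rw [smul_smul, ← hci i]
    rw [hxy]
    simp only [map_smul, LinearMap.smul_apply, smul_eq_mul]
    exact mul_ne_zero hsne (mul_ne_zero hsne hyne)
  refine ⟨main, fun W w hwW h => ?_⟩
  by_contra hne
  exact main w hne (h w hwW)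
end

section
/- Let V be a finite-dimensional ℚ(t)-vector space with a symmetric bilinear form admitting a basis v_1,…,v_n with (v_i, v_j) ∈ δ_{i,j} + t·A_0. Then for any subspace W ⊆ V, V = W ⊕ W^⊥, where W^⊥ = {v ∈ V : (v,w) = 0 for all w ∈ W}. -/
open Polynomial

lemma algebraMap_mem_A0_s5 (f : Polynomial ℚ) : algebraMap ℚ[X] (RatFunc ℚ) f ∈ A0 :=
  ⟨f, 1, by simp, by simp⟩

lemma aniso {n : ℕ} {V : Type*} [AddCommGroup V] [Module (RatFunc ℚ) V]
    (B : LinearMap.BilinForm (RatFunc ℚ) V)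
    (v : Module.Basis (Fin n) (RatFunc ℚ) V)
    (hgram : ∀ i j, B (v i) (v j) - (if i = j then 1 else 0) ∈ tA0Set)
    (x : V) (hx : x ≠ 0) : B x x ≠ 0 := by
  classical
  intro hBxx
  set ι := algebraMap ℚ[X] (RatFunc ℚ) with hι
  set c : Fin n → RatFunc ℚ := fun i => v.repr x i with hc
  -- common denominator
  obtain ⟨g, hg⟩ := IsLocalization.exist_integer_multiples_of_finite
    (nonZeroDivisors ℚ[X]) c
  choose f hf using hg
  have hιg : ι (g : ℚ[X]) ≠ 0 :=
    RatFunc.algebraMap_ne_zero (nonZeroDivisors.coe_ne_zero g)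
  have hfc : ∀ i, ι (f i) = ι (g : ℚ[X]) * c i := by
    intro i
    rw [hf i]
    simp [Algebra.smul_def, hι]
  -- some coordinate is nonzero
  have hcne : ∃ i, c i ≠ 0 := by
    by_contra h
    push_neg at h
    apply hx
    apply v.repr.injective
    ext i
    simpa using h i
  obtain ⟨iw, hiw⟩ := hcne
  have hfiw : f iw ≠ 0 := by
    intro h0
    apply hiw
    have := hfc iw
    rw [h0, map_zero] at this
    exact (mul_eq_zero.mp this.symm).resolve_left hιg
  set S : Finset (Fin n) := Finset.univ.filter (fun i => f i ≠ 0) with hS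
  have hSne : S.Nonempty := ⟨iw, by simp [hS, hfiw]⟩
  set m : ℕ := S.inf' hSne (fun i => (f i).rootMultiplicity 0) with hm
  have hdvd : ∀ i, X ^ m ∣ f i := by
    intro i
    by_cases hi : f i = 0
    · simp [hi]
    · have hiS : i ∈ S := by simp [hS, hi]
      have h1 : m ≤ (f i).rootMultiplicity 0 := Finset.inf'_le _ hiS
      have h2 : (X : ℚ[X]) ^ (f i).rootMultiplicity 0 ∣ f i := by
        simpa using Polynomial.pow_rootMultiplicity_dvd (f i) 0
      exact dvd_trans (pow_dvd_pow X h1) h2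
  choose q hq using hdvd
  obtain ⟨i0, hi0S, hi0⟩ := Finset.exists_mem_eq_inf' hSne
    (fun i => (f i).rootMultiplicity 0)
  have hfi0 : f i0 ≠ 0 := by simpa [hS] using hi0S
  have hq0 : (q i0).eval 0 ≠ 0 := by
    intro h0
    have hX : (X : ℚ[X]) ∣ q i0 := by
      rw [Polynomial.X_dvd_iff, Polynomial.coeff_zero_eq_eval_zero]
      exact h0
    have : (X : ℚ[X]) ^ (m + 1) ∣ f i0 := by
      rw [hq i0, pow_succ]
      exact mul_dvd_mul_left _ hX
    have hle : m + 1 ≤ (f i0).rootMultiplicity 0 := by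
      rw [Polynomial.le_rootMultiplicity_iff hfi0]
      simpa using this
    omega
  -- the rescaled vector y
  set u : RatFunc ℚ := ι (g : ℚ[X]) / ι (X ^ m) with hu
  have hXm : ι (X ^ m) ≠ 0 := RatFunc.algebraMap_ne_zero (pow_ne_zero _ Polynomial.X_ne_zero)
  have huc : ∀ i, u * c i = ι (q i) := by
    intro i
    rw [hu, div_mul_eq_mul_div, ← hfc i, hq i, map_mul]
    rw [mul_comm (ι (X ^ m)) (ι (q i)), mul_div_assoc, div_self hXm, mul_one]
  set y : V := ∑ i, ι (q i) • v i with hy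
  have hyu : y = u • x := by
    rw [hy]
    conv_rhs => rw [← v.sum_repr x]
    rw [Finset.smul_sum]
    refine Finset.sum_congr rfl (fun i _ => ?_)
    rw [smul_smul, huc i]
  have hByy : B y y = 0 := by
    rw [hyu, LinearMap.BilinForm.smul_left, LinearMap.BilinForm.smul_right, hBxx, mul_zero, mul_zero]
  -- gram matrix data
  have hGram : ∀ i j, ∃ a ∈ A0,
      B (v i) (v j) = (if i = j then 1 else 0) + ι X * a := by
    intro i j
    obtain ⟨a, ha, haeq⟩ := hgram i j
    exact ⟨a, ha, by rw [← hι] at haeq; linear_combination haeq⟩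
  choose a ha haeq using hGram
  set A : RatFunc ℚ := ∑ i, ∑ j, ι (q i) * ι (q j) * a i j with hA
  have hAmem : A ∈ A0 := by
    apply Subring.sum_mem
    intro i _
    apply Subring.sum_mem
    intro j _
    exact Subring.mul_mem _ (Subring.mul_mem _ (algebraMap_mem_A0_s5 _) (algebraMap_mem_A0_s5 _)) (ha i j)
  have hexp : B y y = ι (∑ i, q i * q i) + ι X * A := by
    rw [hy, LinearMap.BilinForm.sum_left]
    have : ∀ i, B (ι (q i) • v i) (∑ j, ι (q j) • v j)
        = (ι (q i) * ι (q i)) + ∑ j, ι X * (ι (q i) * ι (q j) * a i j) := by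
      intro i
      rw [LinearMap.BilinForm.sum_right]
      have : ∀ j, B (ι (q i) • v i) (ι (q j) • v j)
          = (if i = j then ι (q i) * ι (q j) else 0) + ι X * (ι (q i) * ι (q j) * a i j) := by
        intro j
        rw [LinearMap.BilinForm.smul_left, LinearMap.BilinForm.smul_right, haeq i j]
        split <;> ring
      rw [Finset.sum_congr rfl (fun j _ => this j), Finset.sum_add_distrib]
      congr 1
      simp
    rw [Finset.sum_congr rfl (fun i _ => this i), Finset.sum_add_distrib, map_sum]
    congr 1
    · exact Finset.sum_congr rfl (fun i _ => by rw [map_mul])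
    · rw [hA, Finset.mul_sum]
      exact Finset.sum_congr rfl (fun i _ => by rw [Finset.mul_sum])
  set P : ℚ[X] := ∑ i, q i * q i with hP
  obtain ⟨fA, gA, hgA, hAeq⟩ := hAmem
  have hιgA : ι gA ≠ 0 := RatFunc.algebraMap_ne_zero (fun h => hgA (by simp [h]))
  have hzero : ι (P * gA + X * fA) = 0 := by
    have h1 : A * ι gA = ι fA := by
      rw [hAeq, div_mul_cancel₀ _ hιgA]
    have h2 : (ι P + ι X * A) * ι gA = 0 := by
      rw [← hexp] at *
      rw [hByy, zero_mul]
    calc ι (P * gA + X * fA) = (ι P + ι X * A) * ι gA := by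
          rw [map_add, map_mul, map_mul, add_mul, mul_assoc, h1]
      _ = 0 := h2
  have hpoly : P * gA + X * fA = 0 := by
    have := RatFunc.algebraMap_injective ℚ
    apply this
    rw [hzero, map_zero]
  have heval : P.eval 0 * gA.eval 0 = 0 := by
    have := congrArg (Polynomial.eval 0) hpoly
    simpa using this
  have hPeval : P.eval 0 ≠ 0 := by
    rw [hP]
    have : (0 : ℚ) < ∑ i, (q i).eval 0 * (q i).eval 0 := by
      apply Finset.sum_pos'
      · exact fun i _ => mul_self_nonneg _
      · exact ⟨i0, Finset.mem_univ _, mul_self_pos.mpr hq0⟩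
    simp only [Polynomial.eval_finset_sum, Polynomial.eval_mul]
    exact ne_of_gt this
  exact hPeval ((mul_eq_zero.mp heval).resolve_right (fun h => hgA h))

/-- with a basis whose Gram matrix entries lie in `δ i j + t·A₀`,
every subspace `W` satisfies `V = W ⊕ W^⊥`. -/
theorem stmt_5 (n : ℕ) (V : Type*) [AddCommGroup V] [Module (RatFunc ℚ) V]
    (B : LinearMap.BilinForm (RatFunc ℚ) V)
    (hsymm : ∀ x y, B x y = B y x)
    (v : Module.Basis (Fin n) (RatFunc ℚ) V)
    (hgram : ∀ i j, B (v i) (v j) - (if i = j then 1 else 0) ∈ tA0Set)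
    (W : Submodule (RatFunc ℚ) V) :
    IsCompl W (B.orthogonal W) ∧
    (B.orthogonal W : Set V) = {x : V | ∀ w ∈ W, B x w = 0} := by
  classical
  have hrefl : B.IsRefl := fun x y h => by rw [hsymm]; exact h
  haveI : FiniteDimensional (RatFunc ℚ) V := Module.Finite.of_basis v
  constructor
  · apply LinearMap.BilinForm.isCompl_orthogonal_of_restrict_nondegenerate hrefl
    refine (LinearMap.IsRefl.nondegenerate_iff_separatingLeft (B := B.restrict W) (hrefl.domRestrict W)).mpr ?_
    rintro ⟨w, hwW⟩ h
    have hww : B w w = 0 := by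
      simpa using h ⟨w, hwW⟩
    have : w = 0 := by
      by_contra hw
      exact aniso B v hgram w hw hww
    exact Subtype.ext this
  · ext z
    simp only [SetLike.mem_coe, LinearMap.BilinForm.mem_orthogonal_iff,
      LinearMap.BilinForm.isOrtho_def, Set.mem_setOf_eq]
    constructor
    · intro h w hw; rw [hsymm]; exact h w hw
    · intro h w hw; rw [hsymm]; exact h w hw
end

section
/- Let n ≥ 1, 1 ≤ s < r ≤ n+1, and for k ∈ {1,…,n} set i_k = k if k < r, i_k = k+1 if k ≥ r, and j_k = k if k < s, j_k = k+1 if k ≥ s. Then for every permutation σ ∈ S_n, the integer s − r + Σ_{k : j_{σ(k)} > i_k} (j_{σ(k)} − i_k) is nonnegative. -/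
lemma stmt_13_aux (n t : ℕ) (h1 : 1 ≤ t) (ht : t ≤ n + 1) :
    ∑ m ∈ Finset.range n, (if t ≤ m + 1 then (1 : ℤ) else 0) = (n : ℤ) + 1 - t := by
  induction n with
  | zero =>
      simp only [Finset.range_zero, Finset.sum_empty]
      omega
  | succ n ih =>
      rw [Finset.sum_range_succ]
      by_cases h : t ≤ n + 1
      · rw [ih h, if_pos (by omega)]
        push_cast; ring
      · have htn : t = n + 2 := by omega
        have hz : ∀ m ∈ Finset.range n, (if t ≤ m + 1 then (1 : ℤ) else 0) = 0 := by
          intro m hm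
          rw [if_neg (by simp at hm; omega)]
        rw [Finset.sum_congr rfl hz, if_neg (by omega)]
        simp; omega

/-- Lemma 2.2.6 of Giri–Pal: let `1 ≤ s < r ≤ n+1`, and for
`k ∈ {1,…,n}` (encoded as `k : Fin n` with value `(k : ℕ) + 1`) set
`i_k = k` if `k < r`, `i_k = k+1` if `k ≥ r`, and `j_k = k` if `k < s`,
`j_k = k+1` if `k ≥ s`.  Then for every permutation `σ ∈ S_n`,
`s − r + Σ_{k : j_{σ(k)} > i_k} (j_{σ(k)} − i_k) ≥ 0`. -/
theorem stmt_13 (n : ℕ) (s r : ℕ) (hs : 1 ≤ s) (hsr : s < r) (hr : r ≤ n + 1)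
    (i j : Fin n → ℕ)
    (hi : ∀ k : Fin n, i k = if (k : ℕ) + 1 < r then (k : ℕ) + 1 else (k : ℕ) + 2)
    (hj : ∀ k : Fin n, j k = if (k : ℕ) + 1 < s then (k : ℕ) + 1 else (k : ℕ) + 2)
    (σ : Equiv.Perm (Fin n)) :
    0 ≤ (s : ℤ) - (r : ℤ) +
        ∑ k ∈ Finset.univ.filter (fun k : Fin n => i k < j (σ k)),
          ((j (σ k) : ℤ) - (i k : ℤ)) := by
  have hterm : ∀ m : Fin n, (j m : ℤ) - (i m : ℤ)
      = (if s ≤ (m : ℕ) + 1 then (1 : ℤ) else 0) - (if r ≤ (m : ℕ) + 1 then (1 : ℤ) else 0) := by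
    intro m
    rw [hi m, hj m]
    split_ifs <;> push_cast <;> omega
  have key : ∑ m : Fin n, ((j m : ℤ) - (i m : ℤ)) = (r : ℤ) - s := by
    calc ∑ m : Fin n, ((j m : ℤ) - (i m : ℤ))
        = ∑ m : Fin n, ((if s ≤ (m : ℕ) + 1 then (1 : ℤ) else 0)
            - (if r ≤ (m : ℕ) + 1 then (1 : ℤ) else 0)) :=
          Finset.sum_congr rfl (fun m _ => hterm m)
      _ = (∑ m : Fin n, (if s ≤ (m : ℕ) + 1 then (1 : ℤ) else 0))
            - ∑ m : Fin n, (if r ≤ (m : ℕ) + 1 then (1 : ℤ) else 0) := Finset.sum_sub_distrib _ _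
      _ = (∑ m ∈ Finset.range n, (if s ≤ m + 1 then (1 : ℤ) else 0))
            - ∑ m ∈ Finset.range n, (if r ≤ m + 1 then (1 : ℤ) else 0) := by
          rw [← Fin.sum_univ_eq_sum_range (fun m => if s ≤ m + 1 then (1 : ℤ) else 0) n,
            ← Fin.sum_univ_eq_sum_range (fun m => if r ≤ m + 1 then (1 : ℤ) else 0) n]
      _ = ((n : ℤ) + 1 - s) - ((n : ℤ) + 1 - r) := by
          rw [stmt_13_aux n s hs (by omega), stmt_13_aux n r (by omega) hr]
      _ = (r : ℤ) - s := by ring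
  have hcomp : ∑ k : Fin n, ((j (σ k) : ℤ) - (i k : ℤ)) = (r : ℤ) - s := by
    have h1 : ∑ k : Fin n, ((j (σ k) : ℤ) - (i k : ℤ))
        = (∑ k : Fin n, (j (σ k) : ℤ)) - ∑ k : Fin n, (i k : ℤ) := Finset.sum_sub_distrib _ _
    have h2 : (∑ k : Fin n, (j (σ k) : ℤ)) = ∑ m : Fin n, (j m : ℤ) :=
      Equiv.sum_comp σ (fun m => (j m : ℤ))
    rw [h1, h2, ← Finset.sum_sub_distrib, key]
  have hsplit := Finset.sum_filter_add_sum_filter_not Finset.univ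
    (fun k : Fin n => i k < j (σ k)) (fun k => (j (σ k) : ℤ) - (i k : ℤ))
  have hnonpos : ∑ k ∈ Finset.univ.filter (fun k : Fin n => ¬ i k < j (σ k)),
      ((j (σ k) : ℤ) - (i k : ℤ)) ≤ 0 := by
    apply Finset.sum_nonpos
    intro k hk
    simp only [Finset.mem_filter, Finset.mem_univ, true_and, not_lt] at hk
    omega
  rw [hcomp] at hsplit
  omega
end
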